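/- Let n ≥ 1, let U be an open subset of the Euclidean space ℝ^{n+1}, and let u : ℝ^{n+1} → ℝ be harmonic on U, i.e. u is C² on U and ∑_{i=0}^{n} ∂²u/∂x_i² = 0 at every point of U. Let x ∈ U be a point where the gradient ∇u(x) ≠ 0. Then the function y ↦ ‖∇u(y)‖ is differentiable at x and ‖∇(‖∇u‖)(x)‖² ≤ (n/(n+1)) · ∑_{i,j=0}^{n} (∂²u/∂x_i∂x_j (x))². Equivalently, the squared Frobenius norm of the Hessian satisfies |∇²u(x)|² ≥ (1 + 1/n) |∇|∇u|(x)|². -/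

import Mathlib

open Finset
open scoped RealInnerProductSpace

lemma kato_index (n : ℕ) (hn : 1 ≤ n) (M : Fin (n+1) → Fin (n+1) → ℝ)
    (hsym : ∀ i j, M i j = M j i) (htr : ∑ i, M i i = 0) :
    ((n : ℝ) + 1) * ∑ j, (M 0 j) ^ 2 ≤ (n : ℝ) * ∑ i, ∑ j, (M i j) ^ 2 := by
  classical
  set t : Finset (Fin (n+1)) := univ.erase 0 with ht
  have hcard : (t.card : ℝ) = n := by
    simp [ht, Finset.card_erase_of_mem, Fintype.card_fin]
  have h0 : M 0 0 = -∑ i ∈ t, M i i := by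
    have := Finset.add_sum_erase univ (fun i => M i i) (Finset.mem_univ 0)
    rw [← ht] at this
    linarith [htr, this]
  -- Cauchy–Schwarz: (M 0 0)^2 ≤ n * ∑_{i∈t} (M i i)^2
  have hCS : (M 0 0) ^ 2 ≤ (n : ℝ) * ∑ i ∈ t, (M i i) ^ 2 := by
    have := sq_sum_le_card_mul_sum_sq (s := t) (f := fun i => M i i)
    rw [h0, neg_sq]
    calc (∑ i ∈ t, M i i) ^ 2 ≤ (t.card : ℝ) * ∑ i ∈ t, (M i i) ^ 2 := by exact_mod_cast this
      _ = (n : ℝ) * ∑ i ∈ t, (M i i) ^ 2 := by rw [hcard]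
  -- split row 0
  have hrow0 : ∑ j, (M 0 j) ^ 2 = (M 0 0) ^ 2 + ∑ j ∈ t, (M 0 j) ^ 2 := by
    rw [← Finset.add_sum_erase univ (fun j => (M 0 j) ^ 2) (Finset.mem_univ 0)]
  -- lower bound each row i ∈ t
  have hrow : ∀ i ∈ t, (M 0 i) ^ 2 + (M i i) ^ 2 ≤ ∑ j, (M i j) ^ 2 := by
    intro i hi
    have hne : (0 : Fin (n+1)) ≠ i := fun h => (Finset.mem_erase.1 hi).1 h.symm
    have : ∑ j ∈ ({0, i} : Finset (Fin (n+1))), (M i j) ^ 2 ≤ ∑ j, (M i j) ^ 2 :=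
      Finset.sum_le_sum_of_subset_of_nonneg (Finset.subset_univ _)
        (fun j _ _ => sq_nonneg _)
    rwa [Finset.sum_pair hne, hsym i 0] at this
  have hbig : (M 0 0) ^ 2 + ∑ j ∈ t, (M 0 j) ^ 2 +
      (∑ i ∈ t, (M 0 i) ^ 2 + ∑ i ∈ t, (M i i) ^ 2) ≤ ∑ i, ∑ j, (M i j) ^ 2 := by
    rw [← Finset.add_sum_erase univ (fun i => ∑ j, (M i j) ^ 2) (Finset.mem_univ 0), ← ht]
    have h1 : (M 0 0) ^ 2 + ∑ j ∈ t, (M 0 j) ^ 2 = ∑ j, (M 0 j) ^ 2 := hrow0.symm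
    have h2 : ∑ i ∈ t, (M 0 i) ^ 2 + ∑ i ∈ t, (M i i) ^ 2 ≤ ∑ i ∈ t, ∑ j, (M i j) ^ 2 := by
      rw [← Finset.sum_add_distrib]
      exact Finset.sum_le_sum hrow
    linarith
  have hS : (0:ℝ) ≤ ∑ j ∈ t, (M 0 j) ^ 2 := Finset.sum_nonneg fun _ _ => sq_nonneg _
  have hn' : (1:ℝ) ≤ n := by exact_mod_cast hn
  have hD : (0:ℝ) ≤ ∑ i ∈ t, (M i i) ^ 2 :=
    Finset.sum_nonneg fun _ _ => sq_nonneg _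
  have hmul := mul_le_mul_of_nonneg_left hbig (by linarith : (0:ℝ) ≤ (n:ℝ))
  have hprod : (0:ℝ) ≤ ((n:ℝ) - 1) * ∑ j ∈ t, (M 0 j) ^ 2 :=
    mul_nonneg (by linarith) hS
  rw [hrow0]
  ring_nf at hmul hprod ⊢
  nlinarith [hmul, hprod, hCS, hS, hD]


/-- Refined Kato inequality for a harmonic function on an open subset of
Euclidean space `ℝ^{n+1}`: at any point where `∇u ≠ 0`, the function `‖∇u‖`
is differentiable and `‖∇‖∇u‖‖² ≤ (n/(n+1)) |∇²u|²` (Frobenius norm of the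
Hessian), equivalently `|∇²u|² ≥ (1 + 1/n) |∇|∇u||²`. -/
theorem refined_kato_harmonic (n : ℕ) (hn : 1 ≤ n)
    (U : Set (EuclideanSpace ℝ (Fin (n + 1)))) (hU : IsOpen U)
    (u : EuclideanSpace ℝ (Fin (n + 1)) → ℝ)
    (hC2 : ContDiffOn ℝ 2 u U)
    (hharm : ∀ y ∈ U,
      ∑ i, fderiv ℝ (fun z => fderiv ℝ u z (EuclideanSpace.single i 1)) y
        (EuclideanSpace.single i 1) = 0)
    (x : EuclideanSpace ℝ (Fin (n + 1))) (hx : x ∈ U)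
    (hgrad : gradient u x ≠ 0) :
    DifferentiableAt ℝ (fun y => ‖gradient u y‖) x ∧
      ‖gradient (fun y => ‖gradient u y‖) x‖ ^ 2 ≤
        ((n : ℝ) / (n + 1)) *
          ∑ i, ∑ j,
            (fderiv ℝ (fun z => fderiv ℝ u z (EuclideanSpace.single j 1)) x
              (EuclideanSpace.single i 1)) ^ 2 := by
  classical
  have hxU : U ∈ nhds x := hU.mem_nhds hx
  have hC2x : ContDiffAt ℝ 2 u x := hC2.contDiffAt hxU
  have hf' : ContDiffAt ℝ 1 (fderiv ℝ u) x :=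
    hC2x.fderiv_right (by norm_num)
  have hf'd : DifferentiableAt ℝ (fderiv ℝ u) x := hf'.differentiableAt one_ne_zero
  set H2 := fderiv ℝ (fderiv ℝ u) x with hH2def
  have hH2 : HasFDerivAt (fderiv ℝ u) H2 x := hf'd.hasFDerivAt
  have hev : ∀ᶠ y in nhds x, HasFDerivAt u (fderiv ℝ u y) y := by
    filter_upwards [hU.eventually_mem hx] with y hy
    exact ((hC2.contDiffAt (hU.mem_nhds hy)).differentiableAt two_ne_zero).hasFDerivAt
  have hsymm : ∀ v w : EuclideanSpace ℝ (Fin (n + 1)), H2 v w = H2 w v :=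
    fun v w => second_derivative_symmetric_of_eventually hev hH2 v w
  -- the gradient map and its derivative
  set T : (EuclideanSpace ℝ (Fin (n + 1)) →L[ℝ] ℝ) →L[ℝ] EuclideanSpace ℝ (Fin (n + 1)) :=
    (InnerProductSpace.toDual ℝ (EuclideanSpace ℝ (Fin (n + 1)))).symm.toContinuousLinearEquiv.toContinuousLinearMap with hTdef
  set H := T.comp H2 with hHdef
  have hg : HasFDerivAt (fun y => gradient u y) H x := T.hasFDerivAt.comp x hH2
  have hHinner : ∀ w z : EuclideanSpace ℝ (Fin (n + 1)), ⟪H w, z⟫ = H2 w z := by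
    intro w z
    exact InnerProductSpace.toDual_symm_apply
  have hHsym : ∀ w z : EuclideanSpace ℝ (Fin (n + 1)), ⟪H w, z⟫ = ⟪w, H z⟫ := by
    intro w z
    rw [hHinner, real_inner_comm, hHinner, hsymm]
  set G := gradient u x with hGdef
  have hGnorm : (0:ℝ) < ‖G‖ := norm_pos_iff.2 hgrad
  -- derivative of y ↦ ‖∇u y‖
  have hnsq : HasFDerivAt (fun y => ‖gradient u y‖ ^ 2)
      (2 • (innerSL ℝ G).comp H) x := hg.norm_sq
  have hGsq : ‖G‖ ^ 2 ≠ 0 := by positivity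
  have hsqrt : HasDerivAt Real.sqrt (1 / (2 * Real.sqrt (‖G‖ ^ 2))) (‖G‖ ^ 2) :=
    Real.hasDerivAt_sqrt hGsq
  have hcomp : HasFDerivAt (fun y => Real.sqrt (‖gradient u y‖ ^ 2))
      ((1 / (2 * Real.sqrt (‖G‖ ^ 2))) • (2 • (innerSL ℝ G).comp H)) x :=
    hsqrt.comp_hasFDerivAt x hnsq
  have hfun : (fun y : EuclideanSpace ℝ (Fin (n + 1)) => Real.sqrt (‖gradient u y‖ ^ 2)) =
      (fun y => ‖gradient u y‖) := by
    funext y; exact Real.sqrt_sq (norm_nonneg _)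
  rw [hfun] at hcomp
  set w := ‖G‖⁻¹ • H G with hwdef
  have hdualw : (InnerProductSpace.toDual ℝ (EuclideanSpace ℝ (Fin (n + 1)))) w =
      (1 / (2 * Real.sqrt (‖G‖ ^ 2))) • (2 • (innerSL ℝ G).comp H) := by
    ext z
    rw [InnerProductSpace.toDual_apply_apply]
    simp only [ContinuousLinearMap.smul_apply, ContinuousLinearMap.comp_apply,
      innerSL_apply_apply, smul_eq_mul]
    rw [hwdef, real_inner_smul_left, ← hHsym,
      Real.sqrt_sq (le_of_lt hGnorm)]
    field_simp
    ring
  have hgradN : HasGradientAt (fun y => ‖gradient u y‖) w x := by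
    rw [hasGradientAt_iff_hasFDerivAt, hdualw]
    exact hcomp
  have hdiff : DifferentiableAt ℝ (fun y => ‖gradient u y‖) x :=
    hgradN.differentiableAt
  refine ⟨hdiff, ?_⟩
  have hgradval : gradient (fun y => ‖gradient u y‖) x = w := hgradN.gradient
  -- unit vector v
  set v := ‖G‖⁻¹ • G with hvdef
  have hv1 : ‖v‖ = 1 := norm_smul_inv_norm hgrad
  have hwHv : w = H v := by rw [hwdef, hvdef, map_smul]
  -- orthonormal basis with b 0 = v
  have horth : Orthonormal ℝ (({0} : Set (Fin (n+1))).restrict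
      (fun _ : Fin (n+1) => v)) := by
    constructor
    · intro i; exact hv1
    · intro i j hij
      exfalso
      apply hij
      have hi := i.2
      have hj := j.2
      simp only [Set.mem_singleton_iff] at hi hj
      exact Subtype.ext (hi.trans hj.symm)
  obtain ⟨b, hb⟩ := horth.exists_orthonormalBasis_extension_of_card_eq
    (by simp [finrank_euclideanSpace_fin])
  have hb0 : b 0 = v := hb 0 rfl
  -- Parseval
  have parseval : ∀ (c : OrthonormalBasis (Fin (n+1)) ℝ (EuclideanSpace ℝ (Fin (n + 1))))
      (z : EuclideanSpace ℝ (Fin (n + 1))),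
      ‖z‖ ^ 2 = ∑ i, ⟪c i, z⟫ ^ 2 := by
    intro c z
    have h := c.sum_inner_mul_inner z z
    rw [real_inner_self_eq_norm_sq] at h
    rw [← h]
    congr 1
    funext i
    rw [real_inner_comm z (c i), sq]
  set e : OrthonormalBasis (Fin (n+1)) ℝ (EuclideanSpace ℝ (Fin (n + 1))) :=
    EuclideanSpace.basisFun (Fin (n+1)) ℝ with hedef
  have he : ∀ i, e i = EuclideanSpace.single i (1:ℝ) := fun i =>
    EuclideanSpace.basisFun_apply _ _ i
  set M : Fin (n+1) → Fin (n+1) → ℝ := fun i j => ⟪H (b i), b j⟫ with hMdef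
  have hMsym : ∀ i j, M i j = M j i := by
    intro i j
    rw [hMdef]
    dsimp only
    rw [hHsym, real_inner_comm]
  -- entries of the Hessian in the standard basis
  have hentry : ∀ (c d : EuclideanSpace ℝ (Fin (n + 1))),
      fderiv ℝ (fun z => fderiv ℝ u z c) x d = H2 d c := by
    intro c d
    have : HasFDerivAt (fun z => fderiv ℝ u z c)
        ((ContinuousLinearMap.apply ℝ ℝ c).comp H2) x :=
      (ContinuousLinearMap.apply ℝ ℝ c).hasFDerivAt.comp x hH2
    rw [this.fderiv]
    rfl
  -- trace of M vanishes
  have htrace_std : ∑ i, ⟪H (e i), e i⟫ = 0 := by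
    have h0 := hharm x hx
    calc ∑ i, ⟪H (e i), e i⟫ = ∑ i, H2 (e i) (e i) := by
          refine Finset.sum_congr rfl fun i _ => hHinner _ _
      _ = 0 := by
          rw [← h0]
          refine Finset.sum_congr rfl fun i _ => ?_
          rw [he i]
          exact (hentry _ _).symm
  have htrace : ∑ i, M i i = 0 := by
    have step1 : ∀ i, M i i = ∑ j, ⟪H (b i), e j⟫ * ⟪e j, b i⟫ := by
      intro i
      rw [hMdef]
      exact (e.sum_inner_mul_inner (H (b i)) (b i)).symm
    have step2 : ∀ j, (∑ i, ⟪H (b i), e j⟫ * ⟪e j, b i⟫) = ⟪H (e j), e j⟫ := by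
      intro j
      have h1 : ∀ i, ⟪H (b i), e j⟫ * ⟪e j, b i⟫ = ⟪e j, b i⟫ * ⟪b i, H (e j)⟫ := by
        intro i
        rw [hHsym (b i) (e j), mul_comm]
      calc (∑ i, ⟪H (b i), e j⟫ * ⟪e j, b i⟫)
          = ∑ i, ⟪e j, b i⟫ * ⟪b i, H (e j)⟫ := Finset.sum_congr rfl fun i _ => h1 i
        _ = ⟪e j, H (e j)⟫ := b.sum_inner_mul_inner (e j) (H (e j))
        _ = ⟪H (e j), e j⟫ := real_inner_comm _ _
    calc ∑ i, M i i = ∑ i, ∑ j, ⟪H (b i), e j⟫ * ⟪e j, b i⟫ :=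
          Finset.sum_congr rfl fun i _ => step1 i
      _ = ∑ j, ∑ i, ⟪H (b i), e j⟫ * ⟪e j, b i⟫ := Finset.sum_comm
      _ = ∑ j, ⟪H (e j), e j⟫ := Finset.sum_congr rfl fun j _ => step2 j
      _ = 0 := htrace_std
  -- the norm of the gradient of the norm
  have hnormw : ‖w‖ ^ 2 = ∑ j, (M 0 j) ^ 2 := by
    rw [hwHv, parseval b (H v)]
    refine Finset.sum_congr rfl fun j _ => ?_
    rw [hMdef]
    dsimp only
    rw [hb0, real_inner_comm]
  -- Frobenius norm is basis independent
  have hfrob : (∑ i, ∑ j, (M i j) ^ 2) = ∑ i, ∑ j, ⟪H (e i), e j⟫ ^ 2 := by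
    calc (∑ i, ∑ j, (M i j) ^ 2) = ∑ i, ‖H (b i)‖ ^ 2 := by
          refine Finset.sum_congr rfl fun i _ => ?_
          rw [parseval b (H (b i))]
          refine Finset.sum_congr rfl fun j _ => ?_
          rw [hMdef]; dsimp only; rw [real_inner_comm]
      _ = ∑ i, ∑ j, ⟪b i, H (e j)⟫ ^ 2 := by
          refine Finset.sum_congr rfl fun i _ => ?_
          rw [parseval e (H (b i))]
          refine Finset.sum_congr rfl fun j _ => ?_
          have h1 : ⟪e j, H (b i)⟫ = ⟪b i, H (e j)⟫ :=
            (real_inner_comm (H (b i)) (e j)).trans (hHsym (b i) (e j))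
          rw [h1]
      _ = ∑ j, ∑ i, ⟪b i, H (e j)⟫ ^ 2 := Finset.sum_comm
      _ = ∑ j, ‖H (e j)‖ ^ 2 := by
          refine Finset.sum_congr rfl fun j _ => ?_
          rw [parseval b (H (e j))]
      _ = ∑ j, ∑ i, ⟪H (e i), e j⟫ ^ 2 := by
          refine Finset.sum_congr rfl fun j _ => ?_
          rw [parseval e (H (e j))]
          refine Finset.sum_congr rfl fun i _ => ?_
          have h2 : ⟪e i, H (e j)⟫ = ⟪H (e i), e j⟫ :=
            (real_inner_comm (H (e j)) (e i)).trans
              ((hHsym (e j) (e i)).trans (real_inner_comm (H (e i)) (e j)))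
          rw [h2]
      _ = ∑ i, ∑ j, ⟪H (e i), e j⟫ ^ 2 := Finset.sum_comm
  have hgoal_sum : (∑ i, ∑ j,
      (fderiv ℝ (fun z => fderiv ℝ u z (EuclideanSpace.single j 1)) x
        (EuclideanSpace.single i 1)) ^ 2) = ∑ i, ∑ j, ⟪H (e i), e j⟫ ^ 2 := by
    refine Finset.sum_congr rfl fun i _ => Finset.sum_congr rfl fun j _ => ?_
    rw [hentry, hHinner, he, he]
  have key := kato_index n hn M hMsym htrace
  rw [hgradval, hnormw, hgoal_sum, ← hfrob, div_mul_eq_mul_div,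
    le_div_iff₀ (by positivity : (0:ℝ) < (n:ℝ) + 1)]
  linarith [key]
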